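/- Let S be a stabilisation semigroup and e, f idempotents with e 𝒥 f. Then e^♯ 𝒥 f^♯. Moreover, if e = x·f·y for some x, y, then e^♯ = x·f^♯·y. -/

import Mathlib

/-- Green's `≤_𝒥` relation: `a = x·b·y` for some `x, y ∈ S¹`. -/
def Jle {S : Type*} [Semigroup S] (a b : S) : Prop :=
  ∃ x y : WithOne S, (a : WithOne S) = x * (b : WithOne S) * y

/-- Green's `𝒥` relation. -/
def Jrel {S : Type*} [Semigroup S] (a b : S) : Prop := Jle a b ∧ Jle b a

/-- Axioms of a stabilisation semigroup (finite ordered semigroup with a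
stabilisation map on idempotents). -/
structure IsStabSemigroup (S : Type*) [Semigroup S] [PartialOrder S] [Fintype S]
    (stab : S → S) : Prop where
  mul_mono : ∀ a a' b b' : S, a ≤ a' → b ≤ b' → a * b ≤ a' * b'
  stab_idem : ∀ e : S, e * e = e → stab e * stab e = stab e
  stab_mono : ∀ e f : S, e * e = e → f * f = f → e ≤ f → stab e ≤ stab f
  stab_consistent : ∀ a b : S, (a * b) * (a * b) = a * b → (b * a) * (b * a) = b * a →
    stab (a * b) = a * (stab (b * a) * b)
  stab_le : ∀ e : S, e * e = e → stab e ≤ e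
  stab_stab : ∀ e : S, e * e = e → stab (stab e) = stab e

private lemma pump_aux {M : Type*} [Monoid M] (a p m q : M) (h : a = p * (a * m) * q) :
    ∀ n : ℕ, a = p ^ n * a * (m * q) ^ n := by
  intro n
  induction n with
  | zero => simp
  | succ n ih =>
    calc a = p * (a * m) * q := h
    _ = p * ((p ^ n * a * (m * q) ^ n) * m) * q := by rw [← ih]
    _ = p ^ (n + 1) * a * (m * q) ^ (n + 1) := by
        rw [pow_succ' p, pow_succ (m * q)]
        simp only [mul_assoc]

private lemma pump {M : Type*} [Monoid M] [Finite M] (a p m q : M) (h : a = p * (a * m) * q) :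
    ∃ c : M, a = (a * m) * c := by
  have key : ∀ i k : ℕ, p ^ i = p ^ (i + (k + 1)) → ∃ c, a = (a * m) * c := by
    intro i k hp
    refine ⟨q * (m * q) ^ k, ?_⟩
    calc a = p ^ (i + (k + 1)) * a * (m * q) ^ (i + (k + 1)) := pump_aux a p m q h _
    _ = p ^ i * a * ((m * q) ^ i * (m * q) ^ (k + 1)) := by rw [← hp, pow_add]
    _ = (p ^ i * a * (m * q) ^ i) * (m * q) ^ (k + 1) := by simp only [mul_assoc]
    _ = a * (m * q) ^ (k + 1) := by rw [← pump_aux a p m q h i]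
    _ = (a * m) * (q * (m * q) ^ k) := by
        rw [pow_succ' (m * q)]
        simp only [mul_assoc]
  obtain ⟨i, j, hne, hp⟩ := Finite.exists_ne_map_eq_of_infinite fun n : ℕ => p ^ n
  rcases lt_or_gt_of_ne hne with hij | hij
  · obtain ⟨k, rfl⟩ := Nat.exists_eq_add_of_lt hij
    exact key i k hp
  · obtain ⟨k, rfl⟩ := Nat.exists_eq_add_of_lt hij
    exact key j k hp.symm

private lemma coe_mul_left' {S : Type*} [Semigroup S] (b : S) (x : WithOne S) :
    ∃ c : S, (b : WithOne S) * x = ↑c := by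
  induction x using WithOne.recOneCoe with
  | one => exact ⟨b, mul_one _⟩
  | coe a => exact ⟨b * a, (WithOne.coe_mul b a).symm⟩

private lemma coe_mul_right' {S : Type*} [Semigroup S] (x : WithOne S) (b : S) :
    ∃ c : S, x * (b : WithOne S) = ↑c := by
  induction x using WithOne.recOneCoe with
  | one => exact ⟨b, one_mul _⟩
  | coe a => exact ⟨a * b, (WithOne.coe_mul a b).symm⟩

private lemma key_step {S : Type*} [Semigroup S] [PartialOrder S] [Fintype S]
    (stab : S → S) (h : IsStabSemigroup S stab)
    (e f : S) (he : e * e = e) (hf : f * f = f)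
    (hfe : Jle f e) (x y : WithOne S) (hxy : (e : WithOne S) = x * (f : WithOne S) * y) :
    (stab e : WithOne S) = x * (stab f : WithOne S) * y := by
  haveI : Finite (WithOne S) := Finite.of_equiv (Option S) (Equiv.refl _)
  have heE : (e : WithOne S) * (e : WithOne S) = (e : WithOne S) := by
    rw [← WithOne.coe_mul, he]
  have hfF : (f : WithOne S) * (f : WithOne S) = (f : WithOne S) := by
    rw [← WithOne.coe_mul, hf]
  have he1 : ∀ z : WithOne S, (e : WithOne S) * ((e : WithOne S) * z) = (e : WithOne S) * z :=
    fun z => by rw [← mul_assoc, heE]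
  have hf1 : ∀ z : WithOne S, (f : WithOne S) * ((f : WithOne S) * z) = (f : WithOne S) * z :=
    fun z => by rw [← mul_assoc, hfF]
  have hxy2 : x * ((f : WithOne S) * y) = (e : WithOne S) := by rw [← mul_assoc, ← hxy]
  have hxy1 : ∀ z : WithOne S, x * ((f : WithOne S) * (y * z)) = (e : WithOne S) * z :=
    fun z => by simp only [← mul_assoc]; rw [← hxy]
  -- the S-elements A = e·x·f and B = f·y·e
  obtain ⟨A, hA⟩ := coe_mul_right' ((e : WithOne S) * x) f
  obtain ⟨B, hB⟩ := coe_mul_left' f (y * (e : WithOne S))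
  have hA' : (A : WithOne S) = (e : WithOne S) * (x * (f : WithOne S)) := by
    rw [← hA, mul_assoc]
  have hB' : (B : WithOne S) = (f : WithOne S) * (y * (e : WithOne S)) := hB.symm
  -- A * B = e
  have hABe : A * B = e := by
    apply WithOne.coe_inj.mp
    rw [WithOne.coe_mul, hA', hB']
    simp only [mul_assoc, he1, hf1, hxy1, hxy2, heE, hfF]
  -- G := B * A
  have hGcoe : ((B * A : S) : WithOne S)
      = (f : WithOne S) * (y * ((e : WithOne S) * (x * (f : WithOne S)))) := by
    rw [WithOne.coe_mul, hA', hB']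
    simp only [mul_assoc, he1, hf1, hxy1, hxy2, heE, hfF]
  have hGG : (B * A) * (B * A) = B * A := by
    apply WithOne.coe_inj.mp
    rw [WithOne.coe_mul, hGcoe]
    simp only [mul_assoc, he1, hf1, hxy1, hxy2, heE, hfF]
  -- G = f, via pumping
  obtain ⟨u, v, huv⟩ := hfe
  have hPQ : (f : WithOne S) = (u * ((e : WithOne S) * x)) *
      ((f : WithOne S) * (y * ((e : WithOne S) * (x * (f : WithOne S))))) *
      (y * ((e : WithOne S) * v)) := by
    conv_lhs => rw [huv]
    simp only [mul_assoc, he1, hf1, hxy1, hxy2, heE, hfF]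
  obtain ⟨c, hc⟩ := pump (f : WithOne S) (u * ((e : WithOne S) * x))
    (y * ((e : WithOne S) * (x * (f : WithOne S)))) (y * ((e : WithOne S) * v)) hPQ
  rw [← hGcoe] at hc
  have hGF : ((B * A : S) : WithOne S) * (f : WithOne S) = ((B * A : S) : WithOne S) := by
    rw [hGcoe]
    simp only [mul_assoc, he1, hf1, hxy1, hxy2, heE, hfF]
  have hGG' : ((B * A : S) : WithOne S) * ((B * A : S) : WithOne S)
      = ((B * A : S) : WithOne S) := by rw [← WithOne.coe_mul, WithOne.coe_inj.mpr hGG]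
  have hGf : B * A = f := by
    apply WithOne.coe_inj.mp
    calc ((B * A : S) : WithOne S) = ((B * A : S) : WithOne S) * (f : WithOne S) := hGF.symm
    _ = ((B * A : S) : WithOne S) * (((B * A : S) : WithOne S) * c) := by rw [← hc]
    _ = ((B * A : S) : WithOne S) * c := by rw [← mul_assoc, hGG']
    _ = (f : WithOne S) := hc.symm
  -- consistency
  have hcons : stab e = A * (stab f * B) := by
    have hcons0 := h.stab_consistent A B (by rw [hABe]; exact he) hGG
    rw [hABe, hGf] at hcons0
    exact hcons0
  -- f · f♯ · f = f♯
  have hstf : stab f = f * (stab f * f) := by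
    have h0 := h.stab_consistent f f (by rw [hf, hf]) (by rw [hf, hf])
    rw [hf] at h0
    exact h0
  have hsf : ((stab f : S) : WithOne S)
      = (f : WithOne S) * (((stab f : S) : WithOne S) * (f : WithOne S)) := by
    conv_lhs => rw [hstf]
    rw [WithOne.coe_mul, WithOne.coe_mul]
  -- x·f = e·x·f and f·y = f·y·e
  have hGter : (f : WithOne S)
      = (f : WithOne S) * (y * ((e : WithOne S) * (x * (f : WithOne S)))) := by
    conv_lhs => rw [← hGf]
    exact hGcoe
  have hxf : x * (f : WithOne S) = (e : WithOne S) * (x * (f : WithOne S)) := by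
    conv_lhs => rw [hGter]
    simp only [mul_assoc, he1, hf1, hxy1, hxy2, heE, hfF]
  have hfy : (f : WithOne S) * y = (f : WithOne S) * (y * (e : WithOne S)) := by
    conv_lhs => rw [hGter]
    simp only [mul_assoc, he1, hf1, hxy1, hxy2, heE, hfF]
  -- conclude
  calc ((stab e : S) : WithOne S)
      = (A : WithOne S) * (((stab f : S) : WithOne S) * (B : WithOne S)) := by
        rw [hcons, WithOne.coe_mul, WithOne.coe_mul]
  _ = ((e : WithOne S) * (x * (f : WithOne S))) *
      (((stab f : S) : WithOne S) * ((f : WithOne S) * (y * (e : WithOne S)))) := by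
        rw [hA', hB']
  _ = (x * (f : WithOne S)) * (((stab f : S) : WithOne S) * ((f : WithOne S) * y)) := by
        rw [← hxf, ← hfy]
  _ = x * (((f : WithOne S) * (((stab f : S) : WithOne S) * (f : WithOne S))) * y) := by
        simp only [mul_assoc]
  _ = x * (stab f : WithOne S) * y := by rw [← hsf, mul_assoc]

/-- If `e 𝒥 f` are idempotents of a stabilisation semigroup, then `e^♯ 𝒥 f^♯`;
moreover if `e = x·f·y` then `e^♯ = x·f^♯·y`. -/
theorem stab_preserves_J {S : Type*} [Semigroup S] [PartialOrder S] [Fintype S]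
    (stab : S → S) (h : IsStabSemigroup S stab)
    (e f : S) (he : e * e = e) (hf : f * f = f) (hJ : Jrel e f) :
    Jrel (stab e) (stab f) ∧
    ∀ x y : WithOne S, (e : WithOne S) = x * (f : WithOne S) * y →
      (stab e : WithOne S) = x * (stab f : WithOne S) * y := by
  refine ⟨⟨?_, ?_⟩, fun x y hxy => key_step stab h e f he hf hJ.2 x y hxy⟩
  · obtain ⟨x, y, hxy⟩ := hJ.1
    exact ⟨x, y, key_step stab h e f he hf hJ.2 x y hxy⟩
  · obtain ⟨u, v, huv⟩ := hJ.2
    exact ⟨u, v, key_step stab h f e hf he hJ.1 u v huv⟩
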